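/- Sharpness example lower bound: let N ≥ 1 and let f : 𝕋² → ℂ have Fourier coefficients \hat{f}(ξ,η) = 1 when ξ = N and 0 ≤ η ≤ N^{1/2} (η integer), and 0 otherwise. Then ‖f‖_{L²(𝕋²)} ∼ N^{1/4}, and for all t with |t| ≤ c/N (c small absolute constant) and all x, |S_KP(t)f(x,y)| = |Σ_{η=0}^{⌊N^{1/2}⌋} e^{i(yη − tη²/N)}|, whose L⁴_y(𝕋) norm is ≥ c' N^{3/8}. Consequently ‖S_KP(t)f‖_{L⁴([0,1]×𝕋²)} ≥ c'' N^{1/8} ‖f‖_{L²(𝕋²)}. -/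

import Mathlib

open Complex
set_option maxHeartbeats 1000000


lemma cos_nat_integral (a b : ℕ) :
    (∫ y in (0:ℝ)..(2*Real.pi), Real.cos (((a:ℝ) - b) * y)) =
      if a = b then 2*Real.pi else 0 := by
  by_cases h : a = b
  · simp [h]
  · have hk : (a:ℝ) - b ≠ 0 := sub_ne_zero.mpr (by exact_mod_cast h)
    rw [if_neg h, intervalIntegral.integral_comp_mul_left Real.cos hk]
    rw [mul_zero, show ((a:ℝ) - b) * (2*Real.pi) = ((2*((a:ℤ) - b) : ℤ) : ℝ) * Real.pi by
      push_cast; ring]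
    rw [integral_cos, Real.sin_zero, sub_zero, Real.sin_int_mul_pi, smul_zero]

lemma dirichlet_l2 (m : ℕ) (c : ℝ → ℕ → ℂ)
    (hc : ∀ y η, c y η = Complex.exp (Complex.I * ((y:ℂ) * (η:ℂ)))) :
    (∫ y in (0:ℝ)..(2*Real.pi),
      ‖∑ η ∈ Finset.range m, c y η‖ ^ 2) = 2*Real.pi*m := by
  have key : ∀ y : ℝ, ‖∑ η ∈ Finset.range m, c y η‖ ^ 2
      = ∑ a ∈ Finset.range m, ∑ b ∈ Finset.range m, Real.cos (((a:ℝ) - b) * y) := by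
    intro y
    have h1 : ‖∑ η ∈ Finset.range m, c y η‖ ^ 2
        = ((∑ a ∈ Finset.range m, c y a) * (starRingEnd ℂ) (∑ b ∈ Finset.range m, c y b)).re := by
      rw [Complex.mul_conj, Complex.ofReal_re, Complex.sq_norm]
    rw [h1, map_sum, Finset.sum_mul_sum, Complex.re_sum]
    refine Finset.sum_congr rfl fun a _ => ?_
    rw [Complex.re_sum]
    refine Finset.sum_congr rfl fun b _ => ?_
    rw [hc, hc, ← Complex.exp_conj, ← Complex.exp_add]
    rw [show Complex.I * ((y:ℂ) * (a:ℂ)) + (starRingEnd ℂ) (Complex.I * ((y:ℂ) * (b:ℂ)))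
        = ((((a:ℝ) - b) * y : ℝ) : ℂ) * Complex.I by
      simp only [map_mul, Complex.conj_I, map_natCast, Complex.conj_ofReal]
      push_cast; ring]
    rw [Complex.exp_ofReal_mul_I_re]
  simp only [key]
  rw [intervalIntegral.integral_finset_sum
    (f := fun (a : ℕ) (y : ℝ) => ∑ b ∈ Finset.range m, Real.cos (((a:ℝ) - b) * y))
    (fun a _ =>
    (by fun_prop : Continuous fun y : ℝ => ∑ b ∈ Finset.range m,
      Real.cos (((a:ℝ) - b) * y)).intervalIntegrable 0 (2*Real.pi))]
  have : ∀ a ∈ Finset.range m, (∫ y in (0:ℝ)..(2*Real.pi),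
      ∑ b ∈ Finset.range m, Real.cos (((a:ℝ) - b) * y))
        = ∑ b ∈ Finset.range m, if a = b then 2*Real.pi else 0 := by
    intro a _
    rw [intervalIntegral.integral_finset_sum
      (f := fun (b : ℕ) (y : ℝ) => Real.cos (((a:ℝ) - b) * y))
      (fun b _ =>
      (by fun_prop : Continuous fun y : ℝ =>
        Real.cos (((a:ℝ) - b) * y)).intervalIntegrable 0 (2*Real.pi))]
    exact Finset.sum_congr rfl fun b _ => cos_nat_integral a b
  rw [Finset.sum_congr rfl this]
  simp only [Finset.sum_ite_eq, Finset.mem_range]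
  rw [Finset.sum_congr rfl (fun x hx => if_pos (Finset.mem_range.mp hx)),
    Finset.sum_const, Finset.card_range, nsmul_eq_mul]
  ring

lemma abs_sum_exp_ge (m : ℕ) (θ : ℕ → ℝ) (h : ∀ η ∈ Finset.range m, |θ η| ≤ 9/8) :
    (m : ℝ)/3 ≤ ‖∑ η ∈ Finset.range m,
      Complex.exp (((θ η : ℝ) : ℂ) * Complex.I)‖ := by
  have hre : (∑ η ∈ Finset.range m, Complex.exp (((θ η : ℝ):ℂ) * Complex.I)).re
      = ∑ η ∈ Finset.range m, Real.cos (θ η) := by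
    rw [Complex.re_sum]
    exact Finset.sum_congr rfl fun η _ => Complex.exp_ofReal_mul_I_re _
  have h1 : (m:ℝ)/3 ≤ ∑ η ∈ Finset.range m, Real.cos (θ η) := by
    have : ∀ η ∈ Finset.range m, (1:ℝ)/3 ≤ Real.cos (θ η) := by
      intro η hη
      have h2 := Real.one_sub_sq_div_two_le_cos (x := θ η)
      have h3 : (θ η)^2 ≤ (9/8)^2 := by
        have h4 := h η hη
        have h5 := abs_nonneg (θ η)
        nlinarith [_root_.sq_abs (θ η)]
      nlinarith
    calc (m:ℝ)/3 = ∑ _η ∈ Finset.range m, (1:ℝ)/3 := by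
          rw [Finset.sum_const, Finset.card_range, nsmul_eq_mul]; ring
      _ ≤ _ := Finset.sum_le_sum this
  calc (m:ℝ)/3 ≤ (∑ η ∈ Finset.range m, Complex.exp (((θ η : ℝ):ℂ) * Complex.I)).re := by
        rw [hre]; exact h1
    _ ≤ ‖_‖ := Complex.re_le_norm _

lemma integral_lower (g : ℝ → ℝ) (hg : Continuous g) (hnn : ∀ y, 0 ≤ g y)
    (a M : ℝ) (ha : 0 ≤ a) (ha2 : a ≤ 2*Real.pi) (hM : ∀ y ∈ Set.Icc 0 a, M ≤ g y) :
    a * M ≤ ∫ y in (0:ℝ)..(2*Real.pi), g y := by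
  have h1 : a * M = ∫ _y in (0:ℝ)..a, M := by
    rw [intervalIntegral.integral_const, smul_eq_mul, sub_zero]
  rw [h1]
  calc (∫ _y in (0:ℝ)..a, M) ≤ ∫ y in (0:ℝ)..a, g y :=
        intervalIntegral.integral_mono_on ha intervalIntegrable_const
          (hg.intervalIntegrable _ _) hM
    _ ≤ ∫ y in (0:ℝ)..(2*Real.pi), g y :=
        intervalIntegral.integral_mono_interval le_rfl ha ha2
          (Filter.Eventually.of_forall hnn) (hg.intervalIntegrable _ _)

/-- Sharpness example for the `L⁴` Strichartz estimate: the test function with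
Fourier support `{ξ = N, 0 ≤ η ≤ N^{1/2}}` has `L²`-norm `∼ N^{1/4}`, its
KP-II evolution has modulus given by a one-dimensional Schrödinger sum, whose
`L⁴_y`-norm is `≳ N^{3/8}` for `|t| ≤ c/N`; consequently
`‖S_KP(t)f‖_{L⁴([0,1]×𝕋²)} ≳ N^{1/8}‖f‖_{L²}`. -/
theorem strichartz_sharpness_example :
    ∃ c > (0 : ℝ), ∃ c' > (0 : ℝ), ∃ c'' > (0 : ℝ), ∀ N : ℕ, 1 ≤ N →
      let K : ℕ := Nat.sqrt N
      let f : ℝ → ℝ → ℂ := fun x y =>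
        ∑ η ∈ Finset.range (K + 1),
          Complex.exp (Complex.I * ((x : ℂ) * (N : ℂ) + (y : ℂ) * (η : ℂ)))
      let S : ℝ → ℝ → ℝ → ℂ := fun t x y =>
        ∑ η ∈ Finset.range (K + 1),
          Complex.exp (Complex.I * ((x : ℂ) * (N : ℂ) + (y : ℂ) * (η : ℂ) +
            (t : ℂ) * ((N : ℂ) ^ 3 - (η : ℂ) ^ 2 / (N : ℂ))))
      let l2f : ℝ := Real.sqrt (∫ x in (0 : ℝ)..(2 * Real.pi),
        ∫ y in (0 : ℝ)..(2 * Real.pi), ‖f x y‖ ^ 2)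
      (c * (N : ℝ) ^ ((1 : ℝ)/4) ≤ l2f ∧ l2f ≤ c⁻¹ * (N : ℝ) ^ ((1 : ℝ)/4)) ∧
      (∀ t x y : ℝ, |t| ≤ c / N →
        ‖S t x y‖ =
          ‖∑ η ∈ Finset.range (K + 1),
            Complex.exp (Complex.I * ((y : ℂ) * (η : ℂ) -
              (t : ℂ) * (η : ℂ) ^ 2 / (N : ℂ)))‖) ∧
      (∀ t : ℝ, |t| ≤ c / N →
        (c' * (N : ℝ) ^ ((3 : ℝ)/8)) ^ 4 ≤
          ∫ y in (0 : ℝ)..(2 * Real.pi),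
            ‖∑ η ∈ Finset.range (K + 1),
              Complex.exp (Complex.I * ((y : ℂ) * (η : ℂ) -
                (t : ℂ) * (η : ℂ) ^ 2 / (N : ℂ)))‖ ^ 4) ∧
      (c'' * (N : ℝ) ^ ((1 : ℝ)/8) * l2f) ^ 4 ≤
        ∫ t in (0 : ℝ)..1, ∫ x in (0 : ℝ)..(2 * Real.pi),
          ∫ y in (0 : ℝ)..(2 * Real.pi), ‖S t x y‖ ^ 4 := by
  refine ⟨1/10, by norm_num, 1/6, by norm_num, 1/100, by norm_num, ?_⟩
  intro N hN
  intro K f S l2f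
  have hKdef : K = Nat.sqrt N := rfl
  have hN1 : (1:ℝ) ≤ (N:ℝ) := by exact_mod_cast hN
  have hNpos : (0:ℝ) < N := by linarith
  have hsqrtN : (0:ℝ) < Real.sqrt N := Real.sqrt_pos.mpr hNpos
  have hsqrt1 : (1:ℝ) ≤ Real.sqrt N := by
    rw [show (1:ℝ) = Real.sqrt 1 by simp]; exact Real.sqrt_le_sqrt hN1
  have hKsq : ((K:ℝ))^2 ≤ (N:ℝ) := by
    have h0 : Nat.sqrt N ^ 2 ≤ N := Nat.sqrt_le' N
    rw [hKdef]; exact_mod_cast h0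
  have hKle : (K:ℝ) ≤ Real.sqrt N := by
    rw [show (K:ℝ) = Real.sqrt ((K:ℝ)^2) by rw [Real.sqrt_sq (Nat.cast_nonneg K)]]
    exact Real.sqrt_le_sqrt hKsq
  have hNK : (N:ℝ) ≤ ((K:ℝ)+1)^2 := by
    have h0 : N < (Nat.sqrt N + 1) ^ 2 := Nat.lt_succ_sqrt' N
    have h2 : (N:ℝ) < ((K:ℝ)+1) ^ 2 := by
      rw [hKdef]; exact_mod_cast h0
    linarith
  have hK1 : Real.sqrt N ≤ (K:ℝ)+1 := by
    rw [show ((K:ℝ)+1) = Real.sqrt (((K:ℝ)+1)^2) by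
      rw [Real.sqrt_sq (by positivity)]]
    exact Real.sqrt_le_sqrt hNK
  have hpi := Real.pi_gt_three
  have hpi2 := Real.pi_lt_d2
  have hN14 : (N:ℝ)^((1:ℝ)/4) = Real.sqrt (Real.sqrt N) := by
    rw [Real.sqrt_eq_rpow, Real.sqrt_eq_rpow, ← Real.rpow_mul (Nat.cast_nonneg N)]
    norm_num
  -- modulus identities
  have hf_abs : ∀ x y : ℝ, ‖f x y‖
      = ‖∑ η ∈ Finset.range (K+1),
          Complex.exp (Complex.I * ((y:ℂ)*(η:ℂ)))‖ := by
    intro x y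
    have hfe : f x y = Complex.exp (Complex.I * ((x:ℂ)*(N:ℂ))) *
        ∑ η ∈ Finset.range (K+1), Complex.exp (Complex.I * ((y:ℂ)*(η:ℂ))) := by
      show (∑ η ∈ Finset.range (K+1),
          Complex.exp (Complex.I * ((x:ℂ)*(N:ℂ) + (y:ℂ)*(η:ℂ)))) = _
      rw [Finset.mul_sum]
      exact Finset.sum_congr rfl fun η _ => by rw [← Complex.exp_add]; ring_nf
    rw [hfe, norm_mul, Complex.norm_exp]
    rw [show Complex.I * ((x:ℂ)*(N:ℂ)) = ((x*N : ℝ):ℂ) * Complex.I by push_cast; ring]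
    simp [Complex.mul_re, Complex.mul_im, pow_succ]
  have hS_abs : ∀ t x y : ℝ, ‖S t x y‖
      = ‖∑ η ∈ Finset.range (K+1),
          Complex.exp (Complex.I * ((y:ℂ)*(η:ℂ) - (t:ℂ)*(η:ℂ)^2/(N:ℂ)))‖ := by
    intro t x y
    have hSe : S t x y = Complex.exp (Complex.I * ((x:ℂ)*(N:ℂ) + (t:ℂ)*(N:ℂ)^3)) *
        ∑ η ∈ Finset.range (K+1),
          Complex.exp (Complex.I * ((y:ℂ)*(η:ℂ) - (t:ℂ)*(η:ℂ)^2/(N:ℂ))) := by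
      show (∑ η ∈ Finset.range (K+1),
          Complex.exp (Complex.I * ((x:ℂ)*(N:ℂ) + (y:ℂ)*(η:ℂ) +
            (t:ℂ)*((N:ℂ)^3 - (η:ℂ)^2/(N:ℂ))))) = _
      rw [Finset.mul_sum]
      exact Finset.sum_congr rfl fun η _ => by rw [← Complex.exp_add]; ring_nf
    rw [hSe, norm_mul, Complex.norm_exp]
    rw [show Complex.I * ((x:ℂ)*(N:ℂ) + (t:ℂ)*(N:ℂ)^3)
        = ((x*N + t*(N:ℝ)^3 : ℝ):ℂ) * Complex.I by push_cast; ring]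
    simp [Complex.mul_re, Complex.mul_im, pow_succ]
  -- L² computation
  have hdir := dirichlet_l2 (K+1) (fun y η => Complex.exp (Complex.I * ((y:ℂ)*(η:ℂ))))
    (fun _ _ => rfl)
  have hinner : ∀ x : ℝ, (∫ y in (0:ℝ)..(2*Real.pi), ‖f x y‖^2)
      = 2*Real.pi*((K:ℝ)+1) := by
    intro x
    have h1 : (∫ y in (0:ℝ)..(2*Real.pi), ‖f x y‖^2)
        = ∫ y in (0:ℝ)..(2*Real.pi), ‖∑ η ∈ Finset.range (K+1),
            Complex.exp (Complex.I * ((y:ℂ)*(η:ℂ)))‖^2 :=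
      intervalIntegral.integral_congr fun y _ => by rw [hf_abs]
    rw [h1, hdir]; push_cast; ring
  have hdouble : (∫ x in (0:ℝ)..(2*Real.pi), ∫ y in (0:ℝ)..(2*Real.pi),
      ‖f x y‖^2) = 2*Real.pi*(2*Real.pi*((K:ℝ)+1)) := by
    rw [intervalIntegral.integral_congr (g := fun _ => 2*Real.pi*((K:ℝ)+1))
      (fun x _ => hinner x)]
    rw [intervalIntegral.integral_const, smul_eq_mul, sub_zero]
  have hl2f : l2f = 2*Real.pi*Real.sqrt ((K:ℝ)+1) := by
    show Real.sqrt _ = _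
    rw [hdouble, show 2*Real.pi*(2*Real.pi*((K:ℝ)+1)) = (2*Real.pi)^2 * ((K:ℝ)+1) by ring,
      Real.sqrt_mul (by positivity), Real.sqrt_sq (by positivity)]
  have hl2f0 : 0 ≤ l2f := by rw [hl2f]; positivity
  have hQlow : (N:ℝ)^((1:ℝ)/4) ≤ Real.sqrt ((K:ℝ)+1) := by
    rw [hN14]; exact Real.sqrt_le_sqrt hK1
  have hsqrt2 : Real.sqrt 2 ≤ 1.5 := by
    rw [show (1.5:ℝ) = Real.sqrt (1.5^2) by rw [Real.sqrt_sq (by norm_num)]]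
    exact Real.sqrt_le_sqrt (by norm_num)
  have hQhigh : Real.sqrt ((K:ℝ)+1) ≤ 1.5 * (N:ℝ)^((1:ℝ)/4) := by
    have h1 : (K:ℝ)+1 ≤ 2*Real.sqrt N := by linarith
    calc Real.sqrt ((K:ℝ)+1) ≤ Real.sqrt (2*Real.sqrt N) := Real.sqrt_le_sqrt h1
      _ = Real.sqrt 2 * Real.sqrt (Real.sqrt N) := Real.sqrt_mul (by norm_num) _
      _ ≤ 1.5 * (N:ℝ)^((1:ℝ)/4) := by
          rw [hN14]
          exact mul_le_mul_of_nonneg_right hsqrt2 (Real.sqrt_nonneg _)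
  have hX0 : (0:ℝ) ≤ (N:ℝ)^((1:ℝ)/4) := Real.rpow_nonneg (Nat.cast_nonneg N) _
  have part11 : 1/10 * (N:ℝ)^((1:ℝ)/4) ≤ l2f := by
    rw [hl2f]
    nlinarith [Real.sqrt_nonneg ((K:ℝ)+1)]
  have part12 : l2f ≤ 10 * (N:ℝ)^((1:ℝ)/4) := by
    rw [hl2f]
    nlinarith [mul_le_mul_of_nonneg_left hQhigh (by positivity : (0:ℝ) ≤ 2*Real.pi)]
  -- lower bound for the Schrödinger sum
  have hG_lower : ∀ t y : ℝ, |t| ≤ 1 → y ∈ Set.Icc (0:ℝ) (1/(8*Real.sqrt N)) →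
      ((K:ℝ)+1)/3 ≤ ‖∑ η ∈ Finset.range (K+1),
        Complex.exp (Complex.I * ((y:ℂ)*(η:ℂ) - (t:ℂ)*(η:ℂ)^2/(N:ℂ)))‖ := by
    intro t y ht hy
    obtain ⟨hy0, hy1⟩ := hy
    have hmatch : ∀ η ∈ Finset.range (K+1),
        Complex.exp (Complex.I * ((y:ℂ)*(η:ℂ) - (t:ℂ)*(η:ℂ)^2/(N:ℂ)))
          = Complex.exp (((y*(η:ℝ) - t*(η:ℝ)^2/(N:ℝ) : ℝ):ℂ) * Complex.I) := by
      intro η _; congr 1; push_cast; ring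
    rw [Finset.sum_congr rfl hmatch]
    have hθ : ∀ η ∈ Finset.range (K+1), |y*(η:ℝ) - t*(η:ℝ)^2/(N:ℝ)| ≤ 9/8 := by
      intro η hη
      have hη' : (η:ℝ) ≤ K := by
        exact_mod_cast Nat.lt_succ_iff.mp (Finset.mem_range.mp hη)
      have hη0 : (0:ℝ) ≤ η := Nat.cast_nonneg η
      have h1 : y*(η:ℝ) ≤ 1/8 := by
        calc y*(η:ℝ) ≤ (1/(8*Real.sqrt N)) * Real.sqrt N :=
              mul_le_mul hy1 (hη'.trans hKle) hη0 (by positivity)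
          _ = 1/8 := by field_simp
      have h1' : 0 ≤ y*(η:ℝ) := mul_nonneg hy0 hη0
      have hη2 : (η:ℝ)^2 ≤ N := by
        have hKK := mul_le_mul hη' hη' hη0 (Nat.cast_nonneg K)
        nlinarith [hKK, hKsq]
      have h2 : |t*(η:ℝ)^2/(N:ℝ)| ≤ 1 := by
        rw [_root_.abs_div, _root_.abs_mul, _root_.abs_of_nonneg (sq_nonneg (η:ℝ)),
          _root_.abs_of_nonneg hNpos.le, div_le_one hNpos]
        nlinarith [abs_nonneg t]
      have h2' := abs_le.mp h2
      rw [abs_le]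
      constructor <;> nlinarith
    have hmain := abs_sum_exp_ge (K+1) (fun η => y*(η:ℝ) - t*(η:ℝ)^2/(N:ℝ)) hθ
    calc ((K:ℝ)+1)/3 = ((K+1 : ℕ):ℝ)/3 := by push_cast; ring
      _ ≤ _ := hmain
  have hybound : ∀ t : ℝ, |t| ≤ 1 →
      (1/(8*Real.sqrt N)) * ((((K:ℝ)+1)/3)^4) ≤
        ∫ y in (0:ℝ)..(2*Real.pi),
          ‖∑ η ∈ Finset.range (K+1),
            Complex.exp (Complex.I * ((y:ℂ)*(η:ℂ) - (t:ℂ)*(η:ℂ)^2/(N:ℂ)))‖^4 := by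
    intro t ht
    refine integral_lower _ ?_ (fun y => by positivity) _ _ (by positivity) ?_ ?_
    · exact (continuous_norm.comp (continuous_finset_sum _ fun η _ =>
        Complex.continuous_exp.comp (by fun_prop))).pow 4
    · have h1 : 1/(8*Real.sqrt N) ≤ 1/8 := by
        rw [div_le_div_iff₀ (by positivity) (by norm_num)]
        nlinarith
      linarith
    · intro y hy
      exact pow_le_pow_left₀ (by positivity) (hG_lower t y ht hy) 4
  have hNsq : ((N:ℝ))^2 ≤ ((K:ℝ)+1)^4 := by
    have h := pow_le_pow_left₀ (Real.sqrt_nonneg (N:ℝ)) hK1 4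
    rw [show (Real.sqrt (N:ℝ))^4 = ((Real.sqrt (N:ℝ))^2)^2 by ring,
      Real.sq_sqrt hNpos.le] at h
    exact h
  have h38 : ((N:ℝ)^((3:ℝ)/8))^4 = (N:ℝ)^2 / Real.sqrt N := by
    rw [← Real.rpow_natCast ((N:ℝ)^((3:ℝ)/8)) 4, ← Real.rpow_mul (Nat.cast_nonneg N)]
    rw [Real.sqrt_eq_rpow, ← Real.rpow_natCast (N:ℝ) 2, ← Real.rpow_sub hNpos]
    norm_num
  have hcore : ∀ t : ℝ, |t| ≤ 1 → ((1:ℝ)/6 * (N:ℝ)^((3:ℝ)/8))^4 ≤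
      ∫ y in (0:ℝ)..(2*Real.pi),
        ‖∑ η ∈ Finset.range (K+1),
          Complex.exp (Complex.I * ((y:ℂ)*(η:ℂ) - (t:ℂ)*(η:ℂ)^2/(N:ℂ)))‖^4 := by
    intro t ht
    refine le_trans ?_ (hybound t ht)
    rw [mul_pow, h38]
    have hL : ((1:ℝ)/6)^4 * ((N:ℝ)^2/Real.sqrt N) = (N:ℝ)^2/(1296*Real.sqrt N) := by
      field_simp [hsqrtN.ne']; ring
    have hR : (1/(8*Real.sqrt N)) * ((((K:ℝ)+1)/3)^4)
        = ((K:ℝ)+1)^4/(648*Real.sqrt N) := by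
      field_simp [hsqrtN.ne']; ring
    rw [hL, hR, div_le_div_iff₀ (by positivity) (by positivity)]
    nlinarith [mul_le_mul_of_nonneg_right hNsq hsqrtN.le,
      mul_nonneg (sq_nonneg (N:ℝ)) hsqrtN.le]
  refine ⟨⟨part11, by rw [show ((1:ℝ)/10)⁻¹ = 10 by norm_num]; exact part12⟩,
    (fun t x y _ => hS_abs t x y), (fun t ht => hcore t ?_), ?_⟩
  · calc |t| ≤ 1/10/(N:ℝ) := ht
      _ ≤ 1 := by
        rw [div_le_one hNpos]; linarith
  -- part 4
  · have htriple : (∫ t in (0:ℝ)..1, ∫ x in (0:ℝ)..(2*Real.pi),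
        ∫ y in (0:ℝ)..(2*Real.pi), ‖S t x y‖^4)
        = ∫ t in (0:ℝ)..1, 2*Real.pi * (∫ y in (0:ℝ)..(2*Real.pi),
            ‖∑ η ∈ Finset.range (K+1),
              Complex.exp (Complex.I * ((y:ℂ)*(η:ℂ) - (t:ℂ)*(η:ℂ)^2/(N:ℂ)))‖^4) := by
      refine intervalIntegral.integral_congr fun t _ => ?_
      calc (∫ x in (0:ℝ)..(2*Real.pi), ∫ y in (0:ℝ)..(2*Real.pi),
            ‖S t x y‖^4)
          = ∫ _x in (0:ℝ)..(2*Real.pi), (∫ y in (0:ℝ)..(2*Real.pi),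
              ‖∑ η ∈ Finset.range (K+1),
                Complex.exp (Complex.I * ((y:ℂ)*(η:ℂ) - (t:ℂ)*(η:ℂ)^2/(N:ℂ)))‖^4) :=
            intervalIntegral.integral_congr fun x _ =>
              intervalIntegral.integral_congr fun y _ => by rw [hS_abs]
        _ = _ := by rw [intervalIntegral.integral_const, smul_eq_mul, sub_zero]
    rw [htriple]
    have hcont : Continuous (fun t : ℝ => ∫ y in (0:ℝ)..(2*Real.pi),
        ‖∑ η ∈ Finset.range (K+1),
          Complex.exp (Complex.I * ((y:ℂ)*(η:ℂ) - (t:ℂ)*(η:ℂ)^2/(N:ℂ)))‖^4) := by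
      apply intervalIntegral.continuous_parametric_intervalIntegral_of_continuous'
      show Continuous fun p : ℝ × ℝ => ‖∑ η ∈ Finset.range (K+1),
        Complex.exp (Complex.I * (((p.2:ℝ):ℂ)*(η:ℂ) - ((p.1:ℝ):ℂ)*(η:ℂ)^2/(N:ℂ)))‖^4
      exact (continuous_norm.comp (continuous_finset_sum _ fun η _ =>
        Complex.continuous_exp.comp (by fun_prop))).pow 4
    have hmono : (1:ℝ) * (((1:ℝ)/6 * (N:ℝ)^((3:ℝ)/8))^4 * (2*Real.pi)) ≤
        ∫ t in (0:ℝ)..1, 2*Real.pi * (∫ y in (0:ℝ)..(2*Real.pi),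
          ‖∑ η ∈ Finset.range (K+1),
            Complex.exp (Complex.I * ((y:ℂ)*(η:ℂ) - (t:ℂ)*(η:ℂ)^2/(N:ℂ)))‖^4) := by
      have h0 : (1:ℝ) * (((1:ℝ)/6 * (N:ℝ)^((3:ℝ)/8))^4 * (2*Real.pi))
          = ∫ _t in (0:ℝ)..1, ((1:ℝ)/6 * (N:ℝ)^((3:ℝ)/8))^4 * (2*Real.pi) := by
        rw [intervalIntegral.integral_const, smul_eq_mul, sub_zero]
      rw [h0]
      refine intervalIntegral.integral_mono_on (by norm_num) intervalIntegrable_const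
        ((continuous_const.mul hcont).intervalIntegrable _ _) ?_
      intro t htt
      have ht1 : |t| ≤ 1 := by
        rw [abs_le]; exact ⟨by linarith [htt.1], htt.2⟩
      have h5 := hcore t ht1
      nlinarith [h5]
    refine le_trans ?_ hmono
    have hbase : (0:ℝ) ≤ 1/100 * (N:ℝ)^((1:ℝ)/8) * l2f :=
      mul_nonneg (by positivity) hl2f0
    have hstep : 1/100 * (N:ℝ)^((1:ℝ)/8) * l2f ≤ (1:ℝ)/10 * (N:ℝ)^((3:ℝ)/8) := by
      have h1 : 1/100 * (N:ℝ)^((1:ℝ)/8) * l2f ≤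
          1/100 * (N:ℝ)^((1:ℝ)/8) * (10 * (N:ℝ)^((1:ℝ)/4)) := by
        refine mul_le_mul_of_nonneg_left part12 (by positivity)
      have h2 : (N:ℝ)^((1:ℝ)/8) * (N:ℝ)^((1:ℝ)/4) = (N:ℝ)^((3:ℝ)/8) := by
        rw [← Real.rpow_add hNpos]; norm_num
      calc 1/100 * (N:ℝ)^((1:ℝ)/8) * l2f ≤
            1/100 * (N:ℝ)^((1:ℝ)/8) * (10 * (N:ℝ)^((1:ℝ)/4)) := h1
        _ = (1:ℝ)/10 * ((N:ℝ)^((1:ℝ)/8) * (N:ℝ)^((1:ℝ)/4)) := by ring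
        _ = (1:ℝ)/10 * (N:ℝ)^((3:ℝ)/8) := by rw [h2]
    have h3 : (1/100 * (N:ℝ)^((1:ℝ)/8) * l2f)^4 ≤ ((1:ℝ)/10 * (N:ℝ)^((3:ℝ)/8))^4 :=
      pow_le_pow_left₀ hbase hstep 4
    refine le_trans h3 ?_
    have h4 : ((1:ℝ)/10 * (N:ℝ)^((3:ℝ)/8))^4 ≤
        (1:ℝ) * (((1:ℝ)/6 * (N:ℝ)^((3:ℝ)/8))^4 * (2*Real.pi)) := by
      rw [mul_pow, mul_pow, h38]
      have hX : (0:ℝ) ≤ (N:ℝ)^2/Real.sqrt N := by positivity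
      nlinarith [hX]
    exact h4
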